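/- Let the sequences A_m, B_m, C_m (coefficients of X^{3m+1}, X^{3m+2}, X^{3m+3} in Δ_m for f(X) = X + a₁X⁴ + a₂X⁵ + a₃X⁶ + ... with Δ_1 = f - X, Δ_{m+1} = Δ_m∘f - Δ_m) satisfy the closed forms: A_m = a₁^m (3m-2)!!!, and B_m = a₂ a₁^{m-1} ((3m-1)!!! + Σ_{r=1}^{m-1} (3r+1)!!!(3m-1)!!!/(3r+2)!!!), as identities in F_p for all m ≥ 1. -/

import Mathlib

/-- The triple factorial `n!!!`: `0!!! = 1!!! = 2!!! = 1`, `n!!! = n · (n-3)!!!`. -/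
def tripleFact : ℕ → ℕ
  | 0 => 1
  | 1 => 1
  | 2 => 1
  | (n + 3) => (n + 3) * tripleFact n

/-- the sequences `A_m, B_m` (satisfying the recurrence coming from the
coefficients of `Δ_m`) have the closed forms `A_m = a₁^m (3m-2)!!!` and
`B_m = a₂ a₁^{m-1} ((3m-1)!!! + ∑_{r=1}^{m-1} (3r+1)!!! (3m-1)!!!/(3r+2)!!!)`, where
`(3m-1)!!!/(3r+2)!!!` denotes the product `(3r+5)(3r+8)⋯(3m-1)`. -/
theorem stmt16 {p : ℕ} (hp : p.Prime) (hp3 : 3 < p) (a1 a2 : ZMod p)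
    (A B : ℕ → ZMod p) (hA1 : A 1 = a1) (hB1 : B 1 = a2)
    (hA : ∀ m ≥ 1, A (m + 1) = a1 * ((3 * m + 1 : ℕ) : ZMod p) * A m)
    (hB : ∀ m ≥ 1, B (m + 1) = a2 * ((3 * m + 1 : ℕ) : ZMod p) * A m
        + a1 * ((3 * m + 2 : ℕ) : ZMod p) * B m) :
    ∀ m ≥ 1,
      A m = a1 ^ m * (tripleFact (3 * m - 2) : ZMod p) ∧
      B m = a2 * a1 ^ (m - 1) * ((tripleFact (3 * m - 1) : ZMod p)
        + ∑ r ∈ Finset.Icc 1 (m - 1), (tripleFact (3 * r + 1) : ZMod p)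
            * ∏ j ∈ Finset.range (m - 1 - r), ((3 * r + 5 + 3 * j : ℕ) : ZMod p)) := by
  intro m hm
  induction m, hm using Nat.le_induction with
  | base =>
    simp [hA1, hB1, tripleFact]
  | succ m hm ih =>
    obtain ⟨k, rfl⟩ : ∃ k, m = k + 1 := ⟨m - 1, (Nat.succ_pred_eq_of_pos hm).symm⟩
    obtain ⟨ihA, ihB⟩ := ih
    have h2 : 3 * (k + 1) - 2 = 3 * k + 1 := by omega
    have h3 : 3 * (k + 1) - 1 = 3 * k + 2 := by omega
    rw [h2] at ihA
    rw [h3] at ihB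
    have hT1 : tripleFact (3 * (k + 1 + 1) - 2) = (3 * k + 4) * tripleFact (3 * k + 1) := by
      have : 3 * (k + 1 + 1) - 2 = (3 * k + 1) + 3 := by omega
      rw [this, tripleFact]
    have hT2 : tripleFact (3 * (k + 1 + 1) - 1) = (3 * k + 5) * tripleFact (3 * k + 2) := by
      have : 3 * (k + 1 + 1) - 1 = (3 * k + 2) + 3 := by omega
      rw [this, tripleFact]
    have hT3 : tripleFact (3 * (k + 1) + 1) = (3 * k + 4) * tripleFact (3 * k + 1) := by
      have : 3 * (k + 1) + 1 = (3 * k + 1) + 3 := by omega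
      rw [this, tripleFact]
    constructor
    · rw [hA (k + 1) (by omega), ihA, hT1]
      push_cast
      ring
    · rw [hB (k + 1) (by omega), ihA, ihB, hT2]
      have h5 : k + 1 + 1 - 1 = k + 1 := rfl
      have h6 : k + 1 - 1 = k := rfl
      rw [h5, h6]
      rw [Finset.sum_Icc_succ_top (by omega : 1 ≤ k + 1), hT3]
      have hsum : ∑ r ∈ Finset.Icc 1 k, (tripleFact (3 * r + 1) : ZMod p)
            * ∏ j ∈ Finset.range (k + 1 - r), ((3 * r + 5 + 3 * j : ℕ) : ZMod p)
          = ((3 * k + 5 : ℕ) : ZMod p) * ∑ r ∈ Finset.Icc 1 k, (tripleFact (3 * r + 1) : ZMod p)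
            * ∏ j ∈ Finset.range (k - r), ((3 * r + 5 + 3 * j : ℕ) : ZMod p) := by
        rw [Finset.mul_sum]
        apply Finset.sum_congr rfl
        intro r hr
        have hrk : r ≤ k := (Finset.mem_Icc.mp hr).2
        have e1 : k + 1 - r = (k - r) + 1 := by omega
        have e2 : 3 * r + 5 + 3 * (k - r) = 3 * k + 5 := by omega
        rw [e1, Finset.prod_range_succ, e2]
        ring
      rw [hsum]
      have e3 : k + 1 - (k + 1) = 0 := by omega
      rw [e3, Finset.prod_range_zero]
      push_cast
      ring
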